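/- Let P be a binary partial group and BP_n ⊆ P^n the set of words all of whose fully parenthesized products are defined and equal. Then BP_n is closed under inner contractions: if (a_1, ..., a_n) ∈ BP_n and 1 ≤ i < n, then (a_1, ..., a_i·a_{i+1}, ..., a_n) ∈ BP_{n-1} with the same common product. -/

import Mathlib

/-- A unital partial magma: a partially defined binary operation (encoded via
`Option`) with a two-sided unit. -/
structure UnitalPartialMagma (P : Type*) where
  mul : P → P → Option P
  one : P
  mul_one : ∀ a, mul a one = some a
  one_mul : ∀ a, mul one a = some a

/-- A binary partial group: a unital partial magma where each element has an
inverse `inv a` with: `a*b` defined implies `(inv a)*(a*b)` defined and equal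
to `b`, and `b*a` defined implies `(b*a)*(inv a)` defined and equal to `b`. -/
structure BinaryPartialGroup (P : Type*) extends UnitalPartialMagma P where
  inv : P → P
  inv_left : ∀ a b c, mul a b = some c → mul (inv a) c = some b
  inv_right : ∀ a b c, mul b a = some c → mul c (inv a) = some b

/-- Full parenthesizations of words, as binary trees. -/
inductive PTree : Type where
  | leaf : PTree
  | node : PTree → PTree → PTree

/-- The number of letters a parenthesization applies to. -/
def PTree.size : PTree → Nat
  | .leaf => 1
  | .node l r => l.size + r.size

/-- The mirrored parenthesization. -/
def PTree.mirror : PTree → PTree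
  | .leaf => .leaf
  | .node l r => .node r.mirror l.mirror

/-- The partial iterated multiplication of a word determined by a full
parenthesization. -/
def evalTree {P : Type*} (M : UnitalPartialMagma P) : PTree → List P → Option P
  | .leaf, [a] => some a
  | .leaf, _ => none
  | .node l r, w =>
      (evalTree M l (w.take l.size)).bind fun x =>
        (evalTree M r (w.drop l.size)).bind fun y => M.mul x y

/-- `IsProd M w a` says that every full parenthesization of the word `w` gives a
defined iterated product, and all these products equal `a`; the empty word has
product the unit.  Thus `w ∈ BP_n` iff `∃ a, IsProd M w a`. -/
def IsProd {P : Type*} (M : UnitalPartialMagma P) (w : List P) (a : P) : Prop :=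
  (w = [] → a = M.one) ∧ ∀ t : PTree, t.size = w.length → evalTree M t w = some a

/-- Expand the `i`-th leaf (0-indexed) of a tree to `node leaf leaf`. -/
def PTree.expand : PTree → Nat → PTree
  | .leaf, _ => .node .leaf .leaf
  | .node l r, i =>
      if i < l.size then .node (l.expand i) r else .node l (r.expand (i - l.size))

lemma PTree.size_pos (t : PTree) : 1 ≤ t.size := by
  induction t with
  | leaf => exact le_refl 1
  | node l r ihl ihr => simp only [size]; omega

lemma PTree.size_expand (t : PTree) (i : Nat) : (t.expand i).size = t.size + 1 := by
  induction t generalizing i with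
  | leaf => rfl
  | node l r ihl ihr =>
    simp only [expand]
    split <;> simp only [size, ihl, ihr] <;> omega

/-- A left comb of size `n+1`. -/
def PTree.comb : Nat → PTree
  | 0 => .leaf
  | n + 1 => .node (comb n) .leaf

lemma PTree.size_comb (n : Nat) : (PTree.comb n).size = n + 1 := by
  induction n with
  | zero => rfl
  | succ n ih => simp only [comb, size, ih]

lemma eval_expand {P : Type*} (M : UnitalPartialMagma P) (t : PTree) (i : Nat)
    (w1 w2 : List P) (x y : P) (h1 : w1.length = i) (h2 : i < t.size)
    (h3 : w1.length + 1 + w2.length = t.size) :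
    evalTree M (t.expand i) (w1 ++ x :: y :: w2)
      = (M.mul x y).bind fun z => evalTree M t (w1 ++ z :: w2) := by
  induction t generalizing i w1 w2 with
  | leaf =>
    have hs : PTree.leaf.size = 1 := rfl
    rw [hs] at h2 h3
    have hw1 : w1 = [] := List.length_eq_zero_iff.mp (by omega)
    have hw2 : w2 = [] := List.length_eq_zero_iff.mp (by omega)
    subst hw1; subst hw2
    show evalTree M (.node .leaf .leaf) [x, y] = _
    simp only [evalTree, PTree.size, List.take, List.drop, Option.bind_fun_some, Option.bind_some, List.nil_append]
  | node l r ihl ihr =>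
    have hs : (PTree.node l r).size = l.size + r.size := rfl
    rw [hs] at h2 h3
    simp only [PTree.expand]
    by_cases hc : i < l.size
    · rw [if_pos hc]
      obtain ⟨w2a, w2b, rfl, hlen⟩ :
          ∃ w2a w2b, w2 = w2a ++ w2b ∧ w2a.length = l.size - i - 1 := by
        refine ⟨w2.take (l.size - i - 1), w2.drop (l.size - i - 1),
          (List.take_append_drop _ _).symm, ?_⟩
        have := r.size_pos
        rw [List.length_take]; omega
      have e1 : w1 ++ x :: y :: (w2a ++ w2b) = (w1 ++ x :: y :: w2a) ++ w2b := by simp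
      have hl1 : (w1 ++ x :: y :: w2a).length = (l.expand i).size := by
        rw [PTree.size_expand]; simp; omega
      have hl2 : ∀ z : P, (w1 ++ z :: w2a).length = l.size := by
        intro z; simp; omega
      have hsz3 : w1.length + 1 + w2a.length = l.size := by omega
      rw [e1]
      show (evalTree M (l.expand i) (((w1 ++ x :: y :: w2a) ++ w2b).take (l.expand i).size)).bind
          (fun p => (evalTree M r (((w1 ++ x :: y :: w2a) ++ w2b).drop (l.expand i).size)).bind
            fun q => M.mul p q) = _
      rw [List.take_left' hl1, List.drop_left' hl1]
      rw [ihl i w1 w2a h1 hc hsz3]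
      cases hxy : M.mul x y with
      | none => simp
      | some z =>
        simp only [Option.bind_some]
        have e2 : w1 ++ z :: (w2a ++ w2b) = (w1 ++ z :: w2a) ++ w2b := by simp
        rw [e2]
        show _ = (evalTree M l (((w1 ++ z :: w2a) ++ w2b).take l.size)).bind
          (fun p => (evalTree M r (((w1 ++ z :: w2a) ++ w2b).drop l.size)).bind
            fun q => M.mul p q)
        rw [List.take_left' (hl2 z), List.drop_left' (hl2 z)]
    · rw [if_neg hc]
      obtain ⟨w1a, w1b, rfl, hlen⟩ :
          ∃ w1a w1b, w1 = w1a ++ w1b ∧ w1a.length = l.size := by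
        refine ⟨w1.take l.size, w1.drop l.size, (List.take_append_drop _ _).symm, ?_⟩
        rw [List.length_take]; omega
      have hl1 : ∀ c : List P, ((w1a ++ w1b) ++ c).take l.size = w1a ∧
          ((w1a ++ w1b) ++ c).drop l.size = w1b ++ c := by
        intro c
        rw [List.append_assoc]
        exact ⟨List.take_left' hlen, List.drop_left' hlen⟩
      have h1' : w1b.length = i - l.size := by
        simp at h1; omega
      have h2' : i - l.size < r.size := by omega
      have h3' : w1b.length + 1 + w2.length = r.size := by
        simp at h3; omega
      have key := ihr (i - l.size) w1b w2 h1' h2' h3'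
      show (evalTree M l (((w1a ++ w1b) ++ x :: y :: w2).take l.size)).bind
          (fun p => (evalTree M (r.expand (i - l.size))
            (((w1a ++ w1b) ++ x :: y :: w2).drop l.size)).bind fun q => M.mul p q) = _
      rw [(hl1 _).1, (hl1 _).2, key]
      cases hxy : M.mul x y with
      | none => cases evalTree M l w1a <;> simp
      | some z =>
        simp only [Option.bind_some]
        rw [show w1a ++ w1b ++ z :: w2 = (w1a ++ w1b) ++ z :: w2 from by simp]
        show _ = (evalTree M l (((w1a ++ w1b) ++ z :: w2).take l.size)).bind
          (fun p => (evalTree M r (((w1a ++ w1b) ++ z :: w2).drop l.size)).bind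
            fun q => M.mul p q)
        rw [(hl1 _).1, (hl1 _).2]

/-- `BP_n` is closed under inner contractions: multiplying two adjacent letters
(a product which is automatically defined) yields a word in `BP_{n-1}` with the
same common product. -/

theorem stmt_15 {P : Type*} (G : BinaryPartialGroup P) (u v : List P) (x y a : P)
    (h : IsProd G.toUnitalPartialMagma (u ++ x :: y :: v) a) :
    ∃ z, G.mul x y = some z ∧ IsProd G.toUnitalPartialMagma (u ++ z :: v) a := by
  obtain ⟨h0, h1⟩ := h
  have hlenw : (u ++ x :: y :: v).length = u.length + 1 + v.length + 1 := by simp; omega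
  set t0 : PTree := PTree.comb (u.length + v.length) with ht0
  have ht0s : t0.size = u.length + 1 + v.length := by
    rw [ht0, PTree.size_comb]; omega
  have key := h1 (t0.expand u.length)
    (by rw [PTree.size_expand, ht0s, hlenw])
  rw [eval_expand G.toUnitalPartialMagma t0 u.length u v x y rfl (by omega) (by omega)] at key
  cases hxy : G.mul x y with
  | none => rw [hxy] at key; simp at key
  | some z =>
    rw [hxy] at key
    simp only [Option.bind_some] at key
    refine ⟨z, rfl, ?_, ?_⟩
    · intro he; simp at he
    · intro t ht
      have hts : t.size = u.length + 1 + v.length := by rw [ht]; simp; omega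
      have := h1 (t.expand u.length) (by rw [PTree.size_expand, hts, hlenw])
      rw [eval_expand G.toUnitalPartialMagma t u.length u v x y rfl (by omega) (by omega),
        hxy] at this
      simpa using this
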